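/- Subentropy is Schur concave in the density matrix: if ρ and σ are n×n density matrices whose eigenvalue vectors, listed in non-increasing order, satisfy λ(ρ) ≺ λ(σ) (i.e. Σ_{i=1}^k λ_i(ρ) ≤ Σ_{i=1}^k λ_i(σ) for all 1 ≤ k ≤ n), then Q(ρ) ≥ Q(σ). -/

import Mathlib

open MeasureTheory Matrix
open scoped ComplexOrder

/-- η(y) = −y ln y (with ln 0 = 0 in Mathlib, so 0 ln 0 = 0). -/
noncomputable def eta (y : ℝ) : ℝ := -(y * Real.log y)

/-- C_n = 1/2 + 1/3 + ⋯ + 1/n (C_1 = 0). -/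
noncomputable def harmC (n : ℕ) : ℝ := ∑ k ∈ Finset.Icc 2 n, (1 : ℝ) / k

/-- Integral of a function over the probability simplex Δ_n with respect to the
normalized uniform measure dx = (n−1)! dx_1 ⋯ dx_{n−1}, realised in the coordinates
(x_1, …, x_{n−1}), with x_n = 1 − (x_1 + ⋯ + x_{n−1}). -/
noncomputable def simplexIntegral (n : ℕ) (f : (Fin n → ℝ) → ℝ) : ℝ :=
  ((n - 1).factorial : ℝ) *
    ∫ y in {y : Fin (n - 1) → ℝ | (∀ i, 0 ≤ y i) ∧ ∑ i, y i ≤ 1},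
      f (fun i => if h : (i : ℕ) < n - 1 then y ⟨(i : ℕ), h⟩ else 1 - ∑ j, y j)

/-- Subentropy of a probability vector: F(λ) = n ∫_{Δ_n} η(λ·x) dx − C_n. -/
noncomputable def subF (n : ℕ) (lam : Fin n → ℝ) : ℝ :=
  (n : ℝ) * simplexIntegral n (fun x => eta (∑ i, lam i * x i)) - harmC n

/-- Subentropy of a (Hermitian) matrix: Q(ρ) = F(λ(ρ)), the subentropy of its
eigenvalue vector (junk value 0 for non-Hermitian matrices). -/
noncomputable def Qmat {ι : Type} [Fintype ι] [DecidableEq ι] (ρ : Matrix ι ι ℂ) : ℝ :=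
  if h : ρ.IsHermitian then
    subF (Fintype.card ι) (fun k => h.eigenvalues ((Fintype.equivFin ι).symm k))
  else 0

/- infrastructure -/

lemma eta_eq : eta = Real.negMulLog := funext fun y => (neg_mul _ _).symm

def Sset (m : ℕ) : Set (Fin m → ℝ) := {y | (∀ i, 0 ≤ y i) ∧ ∑ i, y i ≤ 1}

noncomputable def embc (n : ℕ) (y : Fin (n - 1) → ℝ) : Fin n → ℝ :=
  fun i => if h : (i : ℕ) < n - 1 then y ⟨(i : ℕ), h⟩ else 1 - ∑ j, y j

lemma simplexIntegral_eq (n : ℕ) (f : (Fin n → ℝ) → ℝ) :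
    simplexIntegral n f = ((n - 1).factorial : ℝ) * ∫ y in Sset (n - 1), f (embc n y) := rfl

lemma isClosed_Sset (m : ℕ) : IsClosed (Sset m) := by
  have : Sset m = (⋂ i, {y : Fin m → ℝ | 0 ≤ y i}) ∩ {y | ∑ i, y i ≤ 1} := by
    ext y; simp [Sset, Set.mem_iInter]
  rw [this]
  exact (isClosed_iInter fun i => isClosed_le continuous_const (continuous_apply i)).inter
    (isClosed_le (continuous_finset_sum _ fun i _ => continuous_apply i) continuous_const)

lemma isCompact_Sset (m : ℕ) : IsCompact (Sset m) := by
  refine (isCompact_Icc (a := (0 : Fin m → ℝ)) (b := 1)).of_isClosed_subset (isClosed_Sset m) ?_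
  intro y hy
  constructor
  · intro i; exact hy.1 i
  · intro i
    calc y i ≤ ∑ j, y j := Finset.single_le_sum (fun j _ => hy.1 j) (Finset.mem_univ i)
    _ ≤ 1 := hy.2

lemma measurableSet_Sset (m : ℕ) : MeasurableSet (Sset m) := (isClosed_Sset m).measurableSet

lemma continuous_embc (n : ℕ) (i : Fin n) : Continuous fun y => embc n y i := by
  unfold embc
  by_cases h : (i : ℕ) < n - 1
  · simpa [h] using continuous_apply (⟨(i : ℕ), h⟩ : Fin (n-1))
  · simp only [h, dif_neg, not_false_iff]
    exact continuous_const.sub (continuous_finset_sum _ fun j _ => continuous_apply j)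

lemma continuous_integrand (n : ℕ) (lam : Fin n → ℝ) :
    Continuous fun y => eta (∑ i, lam i * embc n y i) := by
  rw [eta_eq]
  exact Real.continuous_negMulLog.comp
    (continuous_finset_sum _ fun i _ => continuous_const.mul (continuous_embc n i))

lemma integrableOn_integrand (n : ℕ) (lam : Fin n → ℝ) :
    IntegrableOn (fun y => eta (∑ i, lam i * embc n y i)) (Sset (n - 1)) volume :=
  (continuous_integrand n lam).continuousOn.integrableOn_compact (isCompact_Sset _)

lemma embc_nonneg (n : ℕ) {y : Fin (n - 1) → ℝ} (hy : y ∈ Sset (n - 1)) (i : Fin n) :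
    0 ≤ embc n y i := by
  unfold embc
  by_cases h : (i : ℕ) < n - 1
  · simpa [h] using hy.1 _
  · simp only [h, dif_neg, not_false_iff]
    linarith [hy.2]

lemma negMulLog_combo (c s t : ℝ) (hs : 0 ≤ s) (ht : 0 ≤ t) (hc0 : 0 ≤ c) (hc1 : c ≤ 1) :
    c * Real.negMulLog s + (1 - c) * Real.negMulLog t ≤ Real.negMulLog (c * s + (1 - c) * t) := by
  have h1 : (0:ℝ) ≤ 1 - c := by linarith
  have h2 : c + (1 - c) = 1 := by ring
  have := Real.concaveOn_negMulLog.2 (Set.mem_Ici.2 hs) (Set.mem_Ici.2 ht) hc0 h1 h2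
  simpa [smul_eq_mul] using this

lemma subF_concave (n : ℕ) (c : ℝ) (hc0 : 0 ≤ c) (hc1 : c ≤ 1) (u v : Fin n → ℝ)
    (hu : ∀ i, 0 ≤ u i) (hv : ∀ i, 0 ≤ v i) :
    c * subF n u + (1 - c) * subF n v ≤ subF n (fun i => c * u i + (1 - c) * v i) := by
  have key : c * (∫ y in Sset (n-1), eta (∑ i, u i * embc n y i)) +
      (1 - c) * (∫ y in Sset (n-1), eta (∑ i, v i * embc n y i)) ≤
      ∫ y in Sset (n-1), eta (∑ i, (c * u i + (1 - c) * v i) * embc n y i) := by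
    rw [← MeasureTheory.integral_const_mul, ← MeasureTheory.integral_const_mul,
      ← integral_add ((integrableOn_integrand n u).const_mul c)
        ((integrableOn_integrand n v).const_mul (1-c))]
    refine setIntegral_mono_on
      (((integrableOn_integrand n u).const_mul c).add
        ((integrableOn_integrand n v).const_mul (1-c)))
      (integrableOn_integrand n _) (measurableSet_Sset _) ?_
    intro y hy
    have hs : 0 ≤ ∑ i, u i * embc n y i :=
      Finset.sum_nonneg fun i _ => mul_nonneg (hu i) (embc_nonneg n hy i)
    have ht : 0 ≤ ∑ i, v i * embc n y i :=
      Finset.sum_nonneg fun i _ => mul_nonneg (hv i) (embc_nonneg n hy i)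
    have hsum : ∑ i, (c * u i + (1 - c) * v i) * embc n y i =
        c * (∑ i, u i * embc n y i) + (1 - c) * (∑ i, v i * embc n y i) := by
      rw [Finset.mul_sum, Finset.mul_sum, ← Finset.sum_add_distrib]
      exact Finset.sum_congr rfl fun i _ => by ring
    rw [hsum, eta_eq]
    exact negMulLog_combo c _ _ hs ht hc0 hc1
  simp only [subF, simplexIntegral_eq]
  have hfn : (0:ℝ) ≤ (n : ℝ) * ((n-1).factorial : ℝ) := by positivity
  nlinarith [mul_le_mul_of_nonneg_left key hfn]

/- measure preserving affine involutions -/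

lemma measurePreserving_linear_involution {m : ℕ} (L : (Fin m → ℝ) →ₗ[ℝ] (Fin m → ℝ))
    (hinv : ∀ y, L (L y) = y) : MeasurePreserving (⇑L) volume volume := by
  have hcomp : L ∘ₗ L = LinearMap.id := LinearMap.ext hinv
  have hdet2 : LinearMap.det L * LinearMap.det L = 1 := by
    rw [← LinearMap.det_comp, hcomp, LinearMap.det_id]
  have hdet : LinearMap.det L = 1 ∨ LinearMap.det L = -1 := mul_self_eq_one_iff.1 hdet2
  have hdetne : LinearMap.det L ≠ 0 := by rcases hdet with h | h <;> rw [h] <;> norm_num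
  refine ⟨(LinearMap.continuous_of_finiteDimensional L).measurable, ?_⟩
  rw [Real.map_linearMap_volume_pi_eq_smul_volume_pi hdetne]
  rcases hdet with h | h <;>
  · rw [h]
    norm_num

lemma measurePreserving_affine_involution {m : ℕ} (T : (Fin m → ℝ) → (Fin m → ℝ))
    (L : (Fin m → ℝ) →ₗ[ℝ] (Fin m → ℝ)) (cst : Fin m → ℝ)
    (hT : ∀ y, T y = cst + L y) (hinv : ∀ y, L (L y) = y) :
    MeasurePreserving T volume volume := by
  have : T = (fun z => cst + z) ∘ ⇑L := by funext y; simp [hT]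
  rw [this]
  exact (measurePreserving_add_left volume cst).comp (measurePreserving_linear_involution L hinv)

lemma setIntegral_comp_affine_involution {m : ℕ} (T : (Fin m → ℝ) → (Fin m → ℝ))
    (L : (Fin m → ℝ) →ₗ[ℝ] (Fin m → ℝ)) (cst : Fin m → ℝ)
    (hT : ∀ y, T y = cst + L y) (hL : ∀ y, L (L y) = y)
    (hTinv : ∀ y, T (T y) = y)
    (S : Set (Fin m → ℝ)) (hcl : ∀ y ∈ S, T y ∈ S) (f : (Fin m → ℝ) → ℝ) :
    ∫ y in S, f (T y) = ∫ y in S, f y := by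
  have hmp := measurePreserving_affine_involution T L cst hT hL
  have hcont : Continuous T := by
    have : T = (fun z => cst + z) ∘ ⇑L := by funext y; simp [hT]
    rw [this]
    exact (continuous_add_left cst).comp (LinearMap.continuous_of_finiteDimensional L)
  have hemb : MeasurableEmbedding T :=
    MeasurableEquiv.measurableEmbedding
      ⟨⟨T, T, hTinv, hTinv⟩, hcont.measurable, hcont.measurable⟩
  have hpre : T ⁻¹' S = S := by
    ext y
    constructor
    · intro h; have := hcl _ h; rwa [hTinv] at this
    · intro h; exact hcl y h
  calc ∫ y in S, f (T y) = ∫ y in T ⁻¹' S, f (T y) := by rw [hpre]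
  _ = ∫ y in S, f y := hmp.setIntegral_preimage_emb hemb f S

/- symmetry of subF under permutations -/

lemma sum_if_single {m : ℕ} (p' : Fin m) (A : ℝ) (y : Fin m → ℝ) :
    ∑ j, (if j = p' then A else y j) = A + ∑ j, y j - y p' := by
  have h1 : (fun j => if j = p' then A else y j) = Function.update y p' A :=
    funext fun j => (Function.update_apply y p' A j).symm
  rw [h1, Finset.sum_update_of_mem (Finset.mem_univ p')]
  have h2 := Finset.sum_eq_sum_sdiff_singleton_add (Finset.mem_univ p') y
  linarith

lemma subF_comp_symm (n : ℕ) (π : Equiv.Perm (Fin n))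
    (T : (Fin (n-1) → ℝ) → (Fin (n-1) → ℝ))
    (L : (Fin (n-1) → ℝ) →ₗ[ℝ] (Fin (n-1) → ℝ)) (cst : Fin (n-1) → ℝ)
    (hT : ∀ y, T y = cst + L y) (hL : ∀ y, L (L y) = y) (hTinv : ∀ y, T (T y) = y)
    (hcl : ∀ y ∈ Sset (n-1), T y ∈ Sset (n-1))
    (hembc : ∀ y, embc n (T y) = embc n y ∘ ⇑π) (lam : Fin n → ℝ) :
    subF n (lam ∘ ⇑π.symm) = subF n lam := by
  have hint := setIntegral_comp_affine_involution T L cst hT hL hTinv (Sset (n-1)) hcl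
    (fun y => eta (∑ i, lam i * embc n y i))
  have hpt : ∀ y, eta (∑ i, lam i * embc n (T y) i)
      = eta (∑ i, (lam ∘ ⇑π.symm) i * embc n y i) := by
    intro y
    rw [hembc y]
    congr 1
    have h := Equiv.sum_comp π (fun i => lam (π.symm i) * embc n y i)
    simp only [Equiv.symm_apply_apply] at h
    simpa [Function.comp] using h.symm ▸ rfl
  simp only [subF, simplexIntegral_eq]
  congr 3
  calc ∫ y in Sset (n-1), eta (∑ i, (lam ∘ ⇑π.symm) i * embc n y i)
      = ∫ y in Sset (n-1), eta (∑ i, lam i * embc n (T y) i) := by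
        refine setIntegral_congr_fun (measurableSet_Sset _) fun y _ => (hpt y).symm
    _ = ∫ y in Sset (n-1), eta (∑ i, lam i * embc n y i) := hint

def permL (m : ℕ) (e : Equiv.Perm (Fin m)) : (Fin m → ℝ) →ₗ[ℝ] (Fin m → ℝ) where
  toFun y := y ∘ ⇑e
  map_add' _ _ := rfl
  map_smul' _ _ := rfl

noncomputable def lastL (m : ℕ) (p' : Fin m) : (Fin m → ℝ) →ₗ[ℝ] (Fin m → ℝ) where
  toFun y := fun j => if j = p' then -∑ k, y k else y j
  map_add' y z := funext fun j => by
    by_cases h : j = p' <;> simp [h, Finset.sum_add_distrib] <;> ring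
  map_smul' c y := funext fun j => by
    by_cases h : j = p' <;> simp [h, Finset.mul_sum]

lemma subF_swapA (n : ℕ) (p q : Fin n) (hpq : p ≠ q)
    (hp : (p : ℕ) < n - 1) (hq : (q : ℕ) < n - 1) (lam : Fin n → ℝ) :
    subF n (lam ∘ ⇑(Equiv.swap p q)) = subF n lam := by
  set p' : Fin (n-1) := ⟨p, hp⟩
  set q' : Fin (n-1) := ⟨q, hq⟩
  set e : Equiv.Perm (Fin (n-1)) := Equiv.swap p' q'
  set T : (Fin (n-1) → ℝ) → (Fin (n-1) → ℝ) := fun y => y ∘ ⇑e with hTdef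
  have hT : ∀ y, T y = 0 + permL (n-1) e y := fun y => by simp [T, permL]
  have hL : ∀ y, permL (n-1) e (permL (n-1) e y) = y := by
    intro y; funext j; exact congrArg y (Equiv.swap_apply_self p' q' j)
  have hTinv : ∀ y, T (T y) = y := by
    intro y; funext j; exact congrArg y (Equiv.swap_apply_self p' q' j)
  have hsum : ∀ y : Fin (n-1) → ℝ, ∑ j, T y j = ∑ j, y j := fun y => Equiv.sum_comp e y
  have hcl : ∀ y ∈ Sset (n-1), T y ∈ Sset (n-1) := by
    intro y hy
    refine ⟨fun i => hy.1 _, ?_⟩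
    rw [hsum]; exact hy.2
  have hembc : ∀ y, embc n (T y) = embc n y ∘ ⇑(Equiv.swap p q) := by
    intro y
    funext i
    by_cases hi : (i : ℕ) < n - 1
    · have hswapval : (Equiv.swap p q i : ℕ) < n - 1 := by
        rcases eq_or_ne i p with rfl | hip
        · rwa [Equiv.swap_apply_left]
        rcases eq_or_ne i q with rfl | hiq
        · rwa [Equiv.swap_apply_right]
        · rwa [Equiv.swap_apply_of_ne_of_ne hip hiq]
      have hval : ((e ⟨(i : ℕ), hi⟩ : Fin (n-1)) : ℕ) = ((Equiv.swap p q i : Fin n) : ℕ) := by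
        by_cases hip : i = p
        · have h1 : (⟨(i : ℕ), hi⟩ : Fin (n-1)) = p' := Fin.ext (by simp [p', hip])
          rw [h1, hip]
          show ((Equiv.swap p' q' p' : Fin (n-1)) : ℕ) = _
          rw [Equiv.swap_apply_left, Equiv.swap_apply_left]
        · by_cases hiq : i = q
          · have h1 : (⟨(i : ℕ), hi⟩ : Fin (n-1)) = q' := Fin.ext (by simp [q', hiq])
            rw [h1, hiq]
            show ((Equiv.swap p' q' q' : Fin (n-1)) : ℕ) = _
            rw [Equiv.swap_apply_right, Equiv.swap_apply_right]
          · have h1 : (⟨(i : ℕ), hi⟩ : Fin (n-1)) ≠ p' := by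
              simp only [ne_eq, Fin.ext_iff]; exact fun h => hip (Fin.ext h)
            have h2 : (⟨(i : ℕ), hi⟩ : Fin (n-1)) ≠ q' := by
              simp only [ne_eq, Fin.ext_iff]; exact fun h => hiq (Fin.ext h)
            show ((Equiv.swap p' q' _ : Fin (n-1)) : ℕ) = _
            rw [Equiv.swap_apply_of_ne_of_ne h1 h2, Equiv.swap_apply_of_ne_of_ne hip hiq]
      have hkey : e ⟨(i : ℕ), hi⟩ = ⟨((Equiv.swap p q i : Fin n) : ℕ), hswapval⟩ :=
        Fin.ext hval
      simp only [embc, Function.comp_apply, dif_pos hi, dif_pos hswapval]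
      show y (e ⟨(i : ℕ), hi⟩) = _
      rw [hkey]
    · have hip : i ≠ p := fun h => hi (h ▸ hp)
      have hiq : i ≠ q := fun h => hi (h ▸ hq)
      simp only [embc, Function.comp_apply, dif_neg hi,
        Equiv.swap_apply_of_ne_of_ne hip hiq, dif_neg hi, hsum]
  have := subF_comp_symm n (Equiv.swap p q) T (permL (n-1) e) 0 hT hL hTinv hcl hembc lam
  rwa [Equiv.symm_swap] at this

lemma subF_swapB (n : ℕ) (p q : Fin n) (hpq : p ≠ q)
    (hp : (p : ℕ) < n - 1) (hq : ¬ (q : ℕ) < n - 1) (lam : Fin n → ℝ) :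
    subF n (lam ∘ ⇑(Equiv.swap p q)) = subF n lam := by
  have hqval : (q : ℕ) = n - 1 := le_antisymm (by omega) (le_of_not_gt hq)
  set p' : Fin (n-1) := ⟨p, hp⟩
  set T : (Fin (n-1) → ℝ) → (Fin (n-1) → ℝ) :=
    fun y j => if j = p' then 1 - ∑ k, y k else y j with hTdef
  set cst : Fin (n-1) → ℝ := fun j => if j = p' then 1 else 0 with hcst
  have hT : ∀ y, T y = cst + lastL (n-1) p' y := by
    intro y; funext j
    by_cases h : j = p' <;> simp [T, cst, lastL, h] <;> ring
  have hsum : ∀ y : Fin (n-1) → ℝ, ∑ j, T y j = 1 - y p' := by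
    intro y
    rw [show (∑ j, T y j) = ∑ j, (if j = p' then 1 - ∑ k, y k else y j) from rfl,
      sum_if_single]
    ring
  have hTinv : ∀ y, T (T y) = y := by
    intro y; funext j
    by_cases h : j = p'
    · rw [show T (T y) j = if j = p' then 1 - ∑ k, T y k else T y j from rfl, if_pos h,
        hsum, h]
      ring
    · rw [show T (T y) j = if j = p' then 1 - ∑ k, T y k else T y j from rfl, if_neg h,
        show T y j = if j = p' then 1 - ∑ k, y k else y j from rfl, if_neg h]
  have hL : ∀ y, lastL (n-1) p' (lastL (n-1) p' y) = y := by
    intro y; funext j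
    by_cases h : j = p'
    · show (if j = p' then -∑ k, lastL (n-1) p' y k else lastL (n-1) p' y j) = y j
      rw [if_pos h]
      have : ∑ k, lastL (n-1) p' y k = ∑ k, (if k = p' then -∑ l, y l else y k) := rfl
      rw [this, sum_if_single, h]
      ring
    · show (if j = p' then -∑ k, lastL (n-1) p' y k else lastL (n-1) p' y j) = y j
      rw [if_neg h]
      show (if j = p' then -∑ l, y l else y j) = y j
      rw [if_neg h]
  have hcl : ∀ y ∈ Sset (n-1), T y ∈ Sset (n-1) := by
    intro y hy
    constructor
    · intro j
      show 0 ≤ if j = p' then 1 - ∑ k, y k else y j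
      by_cases h : j = p'
      · rw [if_pos h]; linarith [hy.2]
      · rw [if_neg h]; exact hy.1 j
    · rw [hsum]; linarith [hy.1 p']
  have hembc : ∀ y, embc n (T y) = embc n y ∘ ⇑(Equiv.swap p q) := by
    intro y
    funext i
    by_cases hi : (i : ℕ) < n - 1
    · rcases eq_or_ne i p with rfl | hip
      · have : Equiv.swap i q i = q := Equiv.swap_apply_left i q
        simp only [embc, Function.comp_apply, this, dif_pos hi, dif_neg hq]
        show (if (⟨(i:ℕ), hi⟩ : Fin (n-1)) = p' then 1 - ∑ k, y k else y ⟨(i:ℕ), hi⟩) = 1 - ∑ j, y j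
        rw [if_pos rfl]
      · have hiq : i ≠ q := fun h => hq (by rw [← h]; exact hi)
        have : Equiv.swap p q i = i := Equiv.swap_apply_of_ne_of_ne hip hiq
        simp only [embc, Function.comp_apply, this, dif_pos hi]
        show (if (⟨(i:ℕ), hi⟩ : Fin (n-1)) = p' then 1 - ∑ k, y k else y ⟨(i:ℕ), hi⟩) = y ⟨(i:ℕ), hi⟩
        rw [if_neg (by simp only [ne_eq, Fin.ext_iff]; exact fun h => hip (Fin.ext h))]
    · have h2 := i.isLt
      have hiq : i = q := Fin.ext (by omega)
      subst hiq
      simp only [embc, Function.comp_apply, Equiv.swap_apply_right, dif_neg hq, dif_pos hp, hsum]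
      show 1 - (1 - y p') = y p'
      ring
  have := subF_comp_symm n (Equiv.swap p q) T (lastL (n-1) p') cst hT hL hTinv hcl hembc lam
  rwa [Equiv.symm_swap] at this

lemma subF_swap (n : ℕ) (p q : Fin n) (hpq : p ≠ q) (lam : Fin n → ℝ) :
    subF n (lam ∘ ⇑(Equiv.swap p q)) = subF n lam := by
  by_cases hp : (p : ℕ) < n - 1
  · by_cases hq : (q : ℕ) < n - 1
    · exact subF_swapA n p q hpq hp hq lam
    · exact subF_swapB n p q hpq hp hq lam
  · by_cases hq : (q : ℕ) < n - 1
    · rw [Equiv.swap_comm]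
      exact subF_swapB n q p hpq.symm hq hp lam
    · exfalso
      have h1 := p.isLt
      have h2 := q.isLt
      exact hpq (Fin.ext (by omega))

lemma subF_perm (n : ℕ) (π : Equiv.Perm (Fin n)) (lam : Fin n → ℝ) :
    subF n (lam ∘ ⇑π) = subF n lam := by
  have key : ∀ π ∈ Subgroup.closure {σ : Equiv.Perm (Fin n) | σ.IsSwap},
      ∀ lam : Fin n → ℝ, subF n (lam ∘ ⇑π) = subF n lam := by
    intro π hπ
    induction hπ using Subgroup.closure_induction with
    | mem σ hσ =>
      intro lam
      obtain ⟨p, q, hpq, rfl⟩ := hσ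
      exact subF_swap n p q hpq lam
    | one =>
      intro lam
      rfl
    | mul σ τ hσ hτ ihσ ihτ =>
      intro lam
      have h1 : lam ∘ ⇑(σ * τ) = (lam ∘ ⇑σ) ∘ ⇑τ := by
        funext x; simp [Equiv.Perm.mul_apply]
      rw [h1, ihτ (lam ∘ ⇑σ), ihσ lam]
    | inv σ hσ ihσ =>
      intro lam
      have := ihσ (lam ∘ ⇑σ⁻¹)
      have h1 : (lam ∘ ⇑σ⁻¹) ∘ ⇑σ = lam := by
        funext x; simp
      rw [h1] at this
      exact this.symm
  exact key π (by rw [Equiv.Perm.closure_isSwap]; trivial) lam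

lemma subF_schur (n : ℕ) : ∀ N : ℕ, ∀ a b : Fin n → ℝ,
    (Finset.univ.filter (fun i => a i ≠ b i)).card ≤ N →
    Antitone a → Antitone b → (∀ i, 0 ≤ a i) → (∀ i, 0 ≤ b i) →
    (∀ k : Fin n, ∑ i ∈ Finset.Iic k, a i ≤ ∑ i ∈ Finset.Iic k, b i) →
    (∑ i, a i = ∑ i, b i) →
    subF n b ≤ subF n a := by
  intro N
  induction N with
  | zero =>
    intro a b hcard _ _ _ _ _ _
    have hemp : (Finset.univ.filter (fun i => a i ≠ b i)) = ∅ :=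
      Finset.card_eq_zero.1 (Nat.le_zero.1 hcard)
    have : a = b := by
      funext i
      by_contra h
      have : i ∈ Finset.univ.filter (fun i => a i ≠ b i) := by simp [h]
      rw [hemp] at this
      exact absurd this (Finset.notMem_empty i)
    rw [this]
  | succ N ih =>
    intro a b hcard haa hba ha0 hb0 hmaj hsum
    by_cases hab : ∀ i, a i = b i
    · rw [funext hab]
    push_neg at hab
    -- majorization for Iio intervals
    have hmajIio : ∀ m : Fin n, ∑ i ∈ Finset.Iio m, a i ≤ ∑ i ∈ Finset.Iio m, b i := by
      intro m
      by_cases h0 : (m : ℕ) = 0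
      · have : Finset.Iio m = ∅ := by
          ext i; simp only [Finset.mem_Iio, Finset.notMem_empty, iff_false, Fin.lt_def]; omega
        simp [this]
      · have hm := m.isLt
        set m' : Fin n := ⟨(m : ℕ) - 1, by omega⟩ with hm'
        have : Finset.Iio m = Finset.Iic m' := by
          ext i
          simp only [Finset.mem_Iio, Finset.mem_Iic, Fin.lt_def, Fin.le_def, hm']
          omega
        rw [this]
        exact hmaj m'
    have hsplit : ∀ (x : Fin n → ℝ) (m : Fin n),
        ∑ i ∈ Finset.Iic m, x i = x m + ∑ i ∈ Finset.Iio m, x i := by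
      intro x m
      rw [← Finset.Iio_insert, Finset.sum_insert (by simp)]
    -- the largest index where a < b
    set J : Finset (Fin n) := Finset.univ.filter (fun i => a i < b i) with hJ
    have hJne : J.Nonempty := by
      obtain ⟨i₀, hi₀⟩ := hab
      set D : Finset (Fin n) := Finset.univ.filter (fun i => a i ≠ b i) with hD
      have hDne : D.Nonempty := ⟨i₀, by simp [hD, hi₀]⟩
      set i1 : Fin n := D.min' hDne with hi1
      have hi1D : i1 ∈ D := D.min'_mem hDne
      have hlt : ∀ i, i < i1 → a i = b i := by
        intro i hi
        by_contra h
        exact absurd (D.min'_le i (by simp [hD, h])) (not_le.2 hi)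
      have hkey : ∑ i ∈ Finset.Iio i1, a i = ∑ i ∈ Finset.Iio i1, b i :=
        Finset.sum_congr rfl fun i hi => hlt i (Finset.mem_Iio.1 hi)
      have h2 := hmaj i1
      rw [hsplit a, hsplit b, hkey] at h2
      have : a i1 ≤ b i1 := by linarith
      have hne : a i1 ≠ b i1 := by simpa [hD] using hi1D
      exact ⟨i1, by simp [hJ]; exact lt_of_le_of_ne this hne⟩
    set j : Fin n := J.max' hJne with hj
    have hjJ : a j < b j := by have := J.max'_mem hJne; simpa [hJ] using this
    have hjmax : ∀ i, a i < b i → i ≤ j := fun i hi => J.le_max' i (by simp [hJ, hi])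
    -- the gap estimate on Iic m for m ≥ j with equality beyond j
    have hIicgap : ∀ m : Fin n, j ≤ m → (∀ i, j < i → i ≤ m → a i = b i) →
        ∑ i ∈ Finset.Iic m, a i + (b j - a j) ≤ ∑ i ∈ Finset.Iic m, b i := by
      intro m hm heq
      have hsub : Finset.Iic j ⊆ Finset.Iic m := Finset.Iic_subset_Iic.2 hm
      have hsd : ∀ x : Fin n → ℝ, ∑ i ∈ Finset.Iic m \ Finset.Iic j, x i
          + ∑ i ∈ Finset.Iic j, x i = ∑ i ∈ Finset.Iic m, x i :=
        fun x => Finset.sum_sdiff hsub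
      have heqsd : ∑ i ∈ Finset.Iic m \ Finset.Iic j, a i
          = ∑ i ∈ Finset.Iic m \ Finset.Iic j, b i := by
        refine Finset.sum_congr rfl fun i hi => ?_
        rw [Finset.mem_sdiff, Finset.mem_Iic, Finset.mem_Iic] at hi
        exact heq i (not_le.1 hi.2) hi.1
      have h3 : ∑ i ∈ Finset.Iic j, a i + (b j - a j) ≤ ∑ i ∈ Finset.Iic j, b i := by
        rw [hsplit a, hsplit b]
        linarith [hmajIio j]
      have h4 := hsd a
      have h5 := hsd b
      linarith
    -- the smallest index beyond j where b < a
    set K : Finset (Fin n) := Finset.univ.filter (fun i => j < i ∧ b i < a i) with hK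
    have hKne : K.Nonempty := by
      by_contra hKe
      rw [Finset.not_nonempty_iff_eq_empty] at hKe
      have hcompl : ∀ i ∈ (Finset.Iic j)ᶜ, a i ≤ b i := by
        intro i hi
        rw [Finset.mem_compl, Finset.mem_Iic] at hi
        have hji : j < i := not_le.1 hi
        by_contra h
        have : i ∈ K := by simp [hK, hji]; linarith
        rw [hKe] at this
        exact absurd this (Finset.notMem_empty i)
      have h6 := Finset.sum_le_sum hcompl
      have h7 := Finset.sum_add_sum_compl (Finset.Iic j) a
      have h8 := Finset.sum_add_sum_compl (Finset.Iic j) b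
      have h9 := hIicgap j le_rfl (fun i h1 h2 => absurd (lt_of_lt_of_le h1 h2) (lt_irrefl j))
      linarith
    set k : Fin n := K.min' hKne with hk'
    have hkK : j < k ∧ b k < a k := by
      have hmem := K.min'_mem hKne
      exact (Finset.mem_filter.1 hmem).2
    have hkmin : ∀ i, j < i → b i < a i → k ≤ i := fun i h1 h2 => K.min'_le i (by simp [hK, h1, h2])
    have hbet : ∀ i, j < i → i < k → a i = b i := by
      intro i h1 h2
      have hnJ : ¬ a i < b i := fun h => absurd (hjmax i h) (not_le.2 h1)
      have hnK : ¬ b i < a i := fun h => absurd (hkmin i h1 h) (not_le.2 h2)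
      linarith
    have hjk_ne : j ≠ k := ne_of_lt hkK.1
    have hakj : a k ≤ a j := haa hkK.1.le
    -- the transfer
    set δ : ℝ := min (b j - a j) (a k - b k) with hδ'
    have hδ : 0 < δ := lt_min (by linarith) (by linarith [hkK.2])
    have hδ1 : δ ≤ b j - a j := min_le_left _ _
    have hδ2 : δ ≤ a k - b k := min_le_right _ _
    have hbjk : b k < b j := by linarith [hkK.2]
    set c : ℝ := 1 - δ / (b j - b k) with hc'
    have hbjk0 : (0:ℝ) < b j - b k := by linarith
    have hδle : δ ≤ b j - b k := by linarith
    have hc0 : 0 ≤ c := by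
      have := (div_le_one hbjk0).2 hδle
      simp only [hc']
      linarith
    have hc1 : c ≤ 1 := by
      have : 0 ≤ δ / (b j - b k) := div_nonneg hδ.le hbjk0.le
      simp only [hc']
      linarith
    have h1c : (1 - c) * (b j - b k) = δ := by
      have : 1 - c = δ / (b j - b k) := by simp [hc']
      rw [this, div_mul_cancel₀ _ (ne_of_gt hbjk0)]
    set b' : Fin n → ℝ := fun i => c * b i + (1 - c) * b (Equiv.swap j k i) with hb'
    have hb'j : b' j = b j - δ := by
      have h : b' j = b j - (1 - c) * (b j - b k) := by
        simp only [hb', Equiv.swap_apply_left]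
        ring
      rw [h, h1c]
    have hb'k : b' k = b k + δ := by
      have h : b' k = b k + (1 - c) * (b j - b k) := by
        simp only [hb', Equiv.swap_apply_right]
        ring
      rw [h, h1c]
    have hb'o : ∀ i, i ≠ j → i ≠ k → b' i = b i := by
      intro i h1 h2
      simp only [hb', Equiv.swap_apply_of_ne_of_ne h1 h2]
      ring
    have hb'0 : ∀ i, 0 ≤ b' i := by
      intro i
      by_cases h1 : i = j
      · rw [h1, hb'j]; linarith [ha0 j]
      by_cases h2 : i = k
      · rw [h2, hb'k]; linarith [hb0 k]
      · rw [hb'o i h1 h2]; exact hb0 i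
    -- b' is antitone
    have key1 : ∀ i, j < i → b' i ≤ a j := by
      intro i hji
      by_cases hik : i = k
      · rw [hik, hb'k]; linarith
      rcases lt_or_gt_of_ne (fun h : i = k => hik h) with h | h
      · rw [hb'o i (ne_of_gt hji) hik]
        rw [← hbet i hji h]
        exact haa hji.le
      · rw [hb'o i (ne_of_gt hji) hik]
        have := hba h.le
        linarith
    have key2 : ∀ i, i < k → a k ≤ b' i := by
      intro i hik
      by_cases hij : i = j
      · rw [hij, hb'j]; linarith
      rcases lt_or_gt_of_ne (fun h : i = j => hij h) with h | h
      · rw [hb'o i hij (ne_of_lt hik)]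
        have := hba h.le
        linarith
      · rw [hb'o i hij (ne_of_lt hik), ← hbet i h hik]
        exact haa hik.le
    have hb'anti : Antitone b' := by
      intro i1 i2 h12
      rcases eq_or_lt_of_le h12 with rfl | h12
      · exact le_rfl
      show b' i2 ≤ b' i1
      rcases lt_trichotomy i2 j with h | h | h
      · have hi1 : i1 < j := lt_trans h12 h
        rw [hb'o i1 (ne_of_lt hi1) (ne_of_lt (lt_trans hi1 hkK.1)),
          hb'o i2 (ne_of_lt h) (ne_of_lt (lt_trans h hkK.1))]
        exact hba h12.le
      · subst h
        rw [hb'j, hb'o i1 (ne_of_lt h12) (ne_of_lt (lt_trans h12 hkK.1))]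
        have := hba h12.le
        linarith
      · have h2 := key1 i2 h
        rcases lt_trichotomy i1 j with h' | h' | h'
        · rw [hb'o i1 (ne_of_lt h') (ne_of_lt (lt_trans h' hkK.1))]
          have := hba h'.le
          linarith
        · subst h'
          rw [hb'j]
          linarith
        · rcases lt_trichotomy i2 k with h'' | h'' | h''
          · have hi1k : i1 < k := lt_trans h12 h''
            rw [hb'o i1 (ne_of_gt h') (ne_of_lt hi1k),
              hb'o i2 (ne_of_gt h) (ne_of_lt h''), ← hbet i1 h' hi1k, ← hbet i2 h h'']
            exact haa h12.le
          · subst h''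
            have := key2 i1 h12
            rw [hb'k]
            linarith
          · rcases lt_trichotomy i1 k with h3 | h3 | h3
            · have := key2 i1 h3
              rw [hb'o i2 (ne_of_gt h) (ne_of_gt h'')]
              have hbk := hba h''.le
              linarith
            · subst h3
              rw [hb'k, hb'o i2 (ne_of_gt h) (ne_of_gt h'')]
              have hbk := hba h''.le
              linarith
            · rw [hb'o i1 (ne_of_gt h') (ne_of_gt h3),
                hb'o i2 (ne_of_gt h) (ne_of_gt h'')]
              exact hba h12.le
    -- sum formula
    have hfun : ∀ i, b' i = b i + ((if i = j then -δ else 0) + (if i = k then δ else 0)) := by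
      intro i
      by_cases h1 : i = j
      · subst h1
        rw [hb'j, if_pos rfl, if_neg hjk_ne]
        ring
      by_cases h2 : i = k
      · subst h2
        rw [hb'k, if_neg (Ne.symm hjk_ne), if_pos rfl]
        ring
      · rw [hb'o i h1 h2, if_neg h1, if_neg h2]
        ring
    have hsum' : ∀ s : Finset (Fin n), ∑ i ∈ s, b' i =
        ∑ i ∈ s, b i + (if j ∈ s then -δ else 0) + (if k ∈ s then δ else 0) := by
      intro s
      calc ∑ i ∈ s, b' i
          = ∑ i ∈ s, (b i + ((if i = j then -δ else 0) + (if i = k then δ else 0))) :=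
            Finset.sum_congr rfl fun i _ => hfun i
        _ = ∑ i ∈ s, b i + (∑ i ∈ s, (if i = j then -δ else 0)
            + ∑ i ∈ s, (if i = k then δ else 0)) := by
            rw [Finset.sum_add_distrib, Finset.sum_add_distrib]
        _ = ∑ i ∈ s, b i + (if j ∈ s then -δ else 0) + (if k ∈ s then δ else 0) := by
            rw [Finset.sum_ite_eq' s j (fun _ => -δ), Finset.sum_ite_eq' s k (fun _ => δ)]
            ring
    have hmaj' : ∀ m : Fin n, ∑ i ∈ Finset.Iic m, a i ≤ ∑ i ∈ Finset.Iic m, b' i := by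
      intro m
      rw [hsum' (Finset.Iic m)]
      simp only [Finset.mem_Iic]
      by_cases hjm : j ≤ m
      · by_cases hkm : k ≤ m
        · rw [if_pos hjm, if_pos hkm]
          have := hmaj m
          linarith
        · rw [if_pos hjm, if_neg hkm]
          have := hIicgap m hjm (fun i h1 h2 => hbet i h1 (lt_of_le_of_lt h2 (not_le.1 hkm)))
          linarith
      · have hkm : ¬ k ≤ m := fun h => hjm (le_trans hkK.1.le h)
        rw [if_neg hjm, if_neg hkm]
        have := hmaj m
        linarith
    have hsumtot : ∑ i, a i = ∑ i, b' i := by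
      rw [hsum' Finset.univ, if_pos (Finset.mem_univ j), if_pos (Finset.mem_univ k)]
      linarith
    -- the differing set shrinks
    have hcard' : (Finset.univ.filter (fun i => a i ≠ b' i)).card ≤ N := by
      set D : Finset (Fin n) := Finset.univ.filter (fun i => a i ≠ b i) with hD
      set D' : Finset (Fin n) := Finset.univ.filter (fun i => a i ≠ b' i) with hD'
      have hsub : D' ⊆ D := by
        intro i hi
        rw [hD', Finset.mem_filter] at hi
        rw [hD, Finset.mem_filter]
        refine ⟨Finset.mem_univ i, ?_⟩
        by_cases h1 : i = j
        · subst h1; exact ne_of_lt hjJ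
        by_cases h2 : i = k
        · subst h2; exact (ne_of_gt hkK.2)
        · rw [← hb'o i h1 h2]; exact hi.2
      have hwit : ∃ x ∈ D, x ∉ D' := by
        rcases le_total (b j - a j) (a k - b k) with hmin | hmin
        · refine ⟨j, by simp [hD]; exact ne_of_lt hjJ, ?_⟩
          simp only [hD', Finset.mem_filter, Finset.mem_univ, true_and, not_not]
          rw [hb'j, hδ', min_eq_left hmin]
          ring
        · refine ⟨k, by simp [hD]; exact ne_of_gt hkK.2, ?_⟩
          simp only [hD', Finset.mem_filter, Finset.mem_univ, true_and, not_not]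
          rw [hb'k, hδ', min_eq_right hmin]
          ring
      have hlt : D'.card < D.card :=
        Finset.card_lt_card ((Finset.ssubset_iff_of_subset hsub).2 hwit)
      omega
    -- one transfer step
    have hstep : subF n b ≤ subF n b' := by
      have hcon := subF_concave n c hc0 hc1 b (b ∘ ⇑(Equiv.swap j k)) hb0 (fun i => hb0 _)
      have hswap := subF_swap n j k hjk_ne b
      have heq : subF n (fun i => c * b i + (1 - c) * (b ∘ ⇑(Equiv.swap j k)) i) = subF n b' := rfl
      rw [heq, hswap] at hcon
      nlinarith [hcon]
    exact le_trans hstep (ih a b' hcard' haa hb'anti ha0 hb'0 hmaj' hsumtot)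



lemma trace_eq_sum_eig {n : ℕ} {A : Matrix (Fin n) (Fin n) ℂ} (hA : A.IsHermitian) :
    A.trace = ∑ i, (hA.eigenvalues i : ℂ) := by
  exact hA.trace_eq_sum_eigenvalues

lemma subF_cast {m n : ℕ} (h : m = n) (lam : Fin m → ℝ) :
    subF m lam = subF n (fun k => lam (Fin.cast h.symm k)) := by
  subst h; rfl

lemma Qmat_eq_subF (n : ℕ) (τ : Matrix (Fin n) (Fin n) ℂ) (hτ : τ.IsHermitian)
    (v : Fin n → ℝ) (e : Equiv.Perm (Fin n)) (hv : v = hτ.eigenvalues ∘ e) :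
    Qmat τ = subF n v := by
  unfold Qmat
  rw [dif_pos hτ]
  rw [subF_cast (Fintype.card_fin n)]
  set π₁ : Equiv.Perm (Fin n) :=
    (finCongr (Fintype.card_fin n).symm).trans (Fintype.equivFin (Fin n)).symm with hπ₁
  have h1 : (fun k : Fin n => hτ.eigenvalues ((Fintype.equivFin (Fin n)).symm
      (Fin.cast (Fintype.card_fin n).symm k))) = hτ.eigenvalues ∘ ⇑π₁ := rfl
  rw [h1]
  have h2 : hτ.eigenvalues = v ∘ ⇑e.symm := by
    funext x
    rw [hv]
    simp
  rw [h2]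
  have h3 : (v ∘ ⇑e.symm) ∘ ⇑π₁ = v ∘ ⇑(π₁.trans e.symm) := rfl
  rw [h3]
  exact subF_perm n (π₁.trans e.symm) v

/-- subentropy is Schur concave in the density matrix: if the
eigenvalue vectors listed in non-increasing order satisfy λ(ρ) ≺ λ(σ), then Q(ρ) ≥ Q(σ). -/
theorem subentropy_schur_concave (n : ℕ) (ρ σ : Matrix (Fin n) (Fin n) ℂ)
    (hρ : ρ.PosSemidef) (hρt : ρ.trace = 1) (hσ : σ.PosSemidef) (hσt : σ.trace = 1)
    (a b : Fin n → ℝ)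
    (ha : ∃ e : Equiv.Perm (Fin n), a = hρ.isHermitian.eigenvalues ∘ e)
    (hb : ∃ e : Equiv.Perm (Fin n), b = hσ.isHermitian.eigenvalues ∘ e)
    (haa : Antitone a) (hba : Antitone b)
    (hmaj : ∀ k : Fin n, ∑ i ∈ Finset.Iic k, a i ≤ ∑ i ∈ Finset.Iic k, b i) :
    Qmat ρ ≥ Qmat σ := by
  obtain ⟨e, he⟩ := ha
  obtain ⟨f, hf⟩ := hb
  have hQρ : Qmat ρ = subF n a := Qmat_eq_subF n ρ hρ.isHermitian a e he
  have hQσ : Qmat σ = subF n b := Qmat_eq_subF n σ hσ.isHermitian b f hf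
  have ha0 : ∀ i, 0 ≤ a i := by
    intro i
    rw [he]
    exact hρ.eigenvalues_nonneg (e i)
  have hb0 : ∀ i, 0 ≤ b i := by
    intro i
    rw [hf]
    exact hσ.eigenvalues_nonneg (f i)
  have hsum_eig : ∀ (τ : Matrix (Fin n) (Fin n) ℂ) (hτ : τ.PosSemidef), τ.trace = 1 →
      ∑ i, hτ.isHermitian.eigenvalues i = 1 := by
    intro τ hτ ht
    have h := trace_eq_sum_eig hτ.isHermitian
    rw [ht] at h
    have h2 : ((∑ i, hτ.isHermitian.eigenvalues i : ℝ) : ℂ) = 1 := by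
      push_cast
      exact h.symm
    exact_mod_cast h2
  have hsa : ∑ i, a i = 1 := by
    rw [he]
    have := Equiv.sum_comp e hρ.isHermitian.eigenvalues
    simp only [Function.comp_apply] at *
    rw [this]
    exact hsum_eig ρ hρ hρt
  have hsb : ∑ i, b i = 1 := by
    rw [hf]
    have := Equiv.sum_comp f hσ.isHermitian.eigenvalues
    simp only [Function.comp_apply] at *
    rw [this]
    exact hsum_eig σ hσ hσt
  have hcard : (Finset.univ.filter (fun i => a i ≠ b i)).card ≤ n := by
    calc (Finset.univ.filter (fun i => a i ≠ b i)).card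
        ≤ Finset.univ.card := Finset.card_filter_le _ _
      _ = n := by simp
  have := subF_schur n n a b hcard haa hba ha0 hb0 hmaj (by rw [hsa, hsb])
  rw [hQρ, hQσ]
  exact this
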